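/- Agreement is strictly weaker than compliance: for P = ā.c̄ ⊕ b̄ and Q = a + b, P is not compliant with Q, yet participant A has a winning strategy in 𝓒_A(P) | 𝓒_B(Q) (namely, always choosing the b̄ branch). -/

import Mathlib

namespace ESC

/-- Labelled event structure data: events, conflict, enabling, labelling (relational). -/
structure LES (Ev Act : Type) where
  events : Set Ev
  conf : Ev → Ev → Prop
  enab : Set Ev → Ev → Prop
  lab : Ev → Act → Prop

/-- Conflict-freeness of a set of events. -/
def CF {Ev : Type} (C : Ev → Ev → Prop) (X : Set Ev) : Prop :=
  ∀ e ∈ X, ∀ e' ∈ X, ¬ C e e'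

/-- Well-formedness: irreflexive symmetric conflict, saturated enabling over
finite conflict-free subsets, labelling a (partial) function on events. -/
structure IsES {Ev Act : Type} (E : LES Ev Act) : Prop where
  conf_mem : ∀ e e', E.conf e e' → e ∈ E.events ∧ e' ∈ E.events
  conf_irrefl : ∀ e, ¬ E.conf e e
  conf_symm : ∀ e e', E.conf e e' → E.conf e' e
  enab_dom : ∀ X e, E.enab X e → X ⊆ E.events ∧ e ∈ E.events ∧ X.Finite ∧ CF E.conf X
  saturated : ∀ X Y e, E.enab X e → X ⊆ Y → Y ⊆ E.events → Y.Finite → CF E.conf Y → E.enab Y e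
  lab_dom : ∀ e a, E.lab e a → e ∈ E.events
  lab_fun : ∀ e a b, E.lab e a → E.lab e b → a = b
  lab_total : ∀ e ∈ E.events, ∃ a, E.lab e a

/-- The order ⊴ on event structures. -/
def leES {Ev Act : Type} (E E' : LES Ev Act) : Prop :=
  E.events ⊆ E'.events ∧
  (∀ e e', E.conf e e' → E'.conf e e') ∧
  (∀ X e, E.enab X e → E'.enab X e) ∧
  (∀ e ∈ E.events, ∀ a, E.lab e a ↔ E'.lab e a) ∧
  (∀ e e', e ∈ E.events → e' ∈ E.events → E'.conf e e' → E.conf e e') ∧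
  (∀ X e, X ⊆ E.events → e ∈ E.events → E'.enab X e → E.enab X e)

/-- The empty event structure. -/
def emptyES {Ev Act : Type} : LES Ev Act :=
  ⟨∅, fun _ _ => False, fun _ _ => False, fun _ _ => False⟩

/-- Componentwise union of a countable family of event structures. -/
def unionES {Ev Act : Type} (c : ℕ → LES Ev Act) : LES Ev Act :=
  ⟨⋃ n, (c n).events,
   fun e e' => ∃ n, (c n).conf e e',
   fun X e => ∃ n, (c n).enab X e,
   fun e a => ∃ n, (c n).lab e a⟩

/-- Least fixed point (Kleene iteration from the empty ES). -/
def fixES {Ev Act : Type} (F : LES Ev Act → LES Ev Act) : LES Ev Act :=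
  unionES (fun n => F^[n] emptyES)

/-- Events surviving after executing `e`. -/
def remEvents {Ev Act : Type} (E : LES Ev Act) (e : Ev) : Set Ev :=
  E.events \ ({e} ∪ {e' | E.conf e e'})

/-- Remainder `E[e]` of an event structure after executing `e`. -/
def remainder {Ev Act : Type} (E : LES Ev Act) (e : Ev) : LES Ev Act where
  events := remEvents E e
  conf := fun e1 e2 => E.conf e1 e2 ∧ e1 ∈ remEvents E e ∧ e2 ∈ remEvents E e
  enab := fun X e' => ∃ Y, E.enab Y e' ∧ e' ≠ e ∧ ¬ E.conf e' e ∧ CF E.conf (Y ∪ {e}) ∧ X = Y \ {e}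
  lab := fun e' a => E.lab e' a ∧ e' ∈ remEvents E e

/-- Finite plays (as lists), via iterated remainders. -/
def isPlayL {Ev Act : Type} : LES Ev Act → List Ev → Prop
  | _, [] => True
  | E, e :: σ => E.enab ∅ e ∧ isPlayL (remainder E e) σ

/-- The set of events occurring among the first `i` positions of `σ`. -/
def prefixSet {Ev : Type} (σ : ℕ → Option Ev) (i : ℕ) : Set Ev :=
  {e | ∃ j, j < i ∧ σ j = some e}

/-- The list of the first `i` events of `σ`. -/
def prefixList {Ev : Type} (σ : ℕ → Option Ev) : ℕ → List Ev
  | 0 => []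
  | i + 1 => prefixList σ i ++ (σ i).toList

/-- The remainder of `E` after the first `i` events of `σ`. -/
def remAfter {Ev Act : Type} (E : LES Ev Act) (σ : ℕ → Option Ev) : ℕ → LES Ev Act
  | 0 => E
  | i + 1 =>
    match σ i with
    | none => remAfter E σ i
    | some e => remainder (remAfter E σ i) e

/-- Plays, possibly infinite: `σ i = none` means the play has ended before `i`. -/
def IsPlay {Ev Act : Type} (E : LES Ev Act) (σ : ℕ → Option Ev) : Prop :=
  (∀ i j, i ≤ j → σ i = none → σ j = none) ∧
  (∀ i e, σ i = some e → (remAfter E σ i).enab ∅ e)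

/-- Innocence of participant `A` in the play `σ`. -/
def Innocent {Ev Act Ppt : Type} (π : Ev → Ppt) (E : LES Ev Act) (A : Ppt)
    (σ : ℕ → Option Ev) : Prop :=
  ∀ i e, π e = A → E.enab (prefixSet σ i) e →
    ∃ j, i ≤ j ∧ ∃ e', σ j = some e' ∧ (E.conf e' e ∨ e' = e)

/-- Strategies for `A`: map finite plays to sets of `A`'s events extending the play. -/
def IsStrategy {Ev Act Ppt : Type} (π : Ev → Ppt) (E : LES Ev Act) (A : Ppt)
    (S : List Ev → Set Ev) : Prop :=
  ∀ σ, isPlayL E σ → ∀ e ∈ S σ, π e = A ∧ isPlayL E (σ ++ [e])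

/-- `σ` conforms to strategy `S` for participant `A`. -/
def Conforms {Ev Ppt : Type} (π : Ev → Ppt) (A : Ppt) (S : List Ev → Set Ev)
    (σ : ℕ → Option Ev) : Prop :=
  ∀ i e, σ i = some e → π e = A → e ∈ S (prefixList σ i)

/-- Position `j` is within the play `σ`. -/
def validPos {Ev : Type} (σ : ℕ → Option Ev) (j : ℕ) : Prop :=
  ∀ k, k < j → σ k ≠ none

/-- Fairness of `σ` w.r.t. strategy `S`: permanently prescribed events happen. -/
def FairW {Ev : Type} (S : List Ev → Set Ev) (σ : ℕ → Option Ev) : Prop :=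
  ∀ i e, validPos σ i →
    (∀ j, i ≤ j → validPos σ j → e ∈ S (prefixList σ j)) →
    ∃ h, i ≤ h ∧ σ h = some e

/-- A contract: a labelled ES plus a partial payoff assignment. -/
structure Contract (Ev Act Ppt : Type) where
  es : LES Ev Act
  payoff : Ppt → Option (Set (ℕ → Option Ev))

/-- Winning plays of `A`. -/
def Wins {Ev Act Ppt : Type} (π : Ev → Ppt) (C : Contract Ev Act Ppt) (A : Ppt)
    (σ : ℕ → Option Ev) : Prop :=
  (∃ S, C.payoff A = some S ∧ σ ∈ S ∧ ∀ B : Ppt, Innocent π C.es B σ) ∨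
  (Innocent π C.es A σ ∧ ∃ B : Ppt, B ≠ A ∧ ¬ Innocent π C.es B σ)

/-- `S` is a winning strategy for `A` in `C`. -/
def WinningFor {Ev Act Ppt : Type} (π : Ev → Ppt) (C : Contract Ev Act Ppt) (A : Ppt)
    (S : List Ev → Set Ev) : Prop :=
  IsStrategy π C.es A S ∧
  ∀ σ, IsPlay C.es σ → Conforms π A S σ → FairW S σ → Wins π C A σ

/-- The eager strategy of `A`: do all currently enabled events of `A`. -/
def eager {Ev Act Ppt : Type} (π : Ev → Ppt) (E : LES Ev Act) (A : Ppt)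
    (σ : List Ev) : Set Ev :=
  {e | π e = A ∧ E.enab {x | x ∈ σ} e}

/-- Composability of contracts: payoff domains are disjoint. -/
def Composable {Ev Act Ppt : Type} (C C' : Contract Ev Act Ppt) : Prop :=
  ∀ A : Ppt, C.payoff A = none ∨ C'.payoff A = none

/-- Plain (componentwise-union) composition of contracts. -/
def ccompU {Ev Act Ppt : Type} (C C' : Contract Ev Act Ppt) : Contract Ev Act Ppt :=
  ⟨⟨C.es.events ∪ C'.es.events,
    fun e e' => C.es.conf e e' ∨ C'.es.conf e e',
    fun X e => C.es.enab X e ∨ C'.es.enab X e,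
    fun e a => C.es.lab e a ∨ C'.es.lab e a⟩,
   fun A => (C.payoff A).orElse (fun _ => C'.payoff A)⟩

/-! ### Binary session types -/

/-- Session types (binary choices encode finite non-empty choices), extended with
committed branches `comm`, one-position buffers `buf`, and the stuck state `zero`. -/
inductive Proc (Act : Type) where
  | success : Proc Act
  | send : Act → Proc Act → Proc Act      -- ā.P as an internal branch
  | recv : Act → Proc Act → Proc Act      -- a.P as an external branch
  | ichoice : Proc Act → Proc Act → Proc Act  -- ⊕
  | echoice : Proc Act → Proc Act → Proc Act  -- +
  | var : ℕ → Proc Act                    -- de Bruijn variable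
  | recur : Proc Act → Proc Act             -- rec x.P
  | comm : Act → Proc Act → Proc Act      -- committed internal branch ā.P
  | buf : Act → Proc Act → Proc Act       -- [ā]P
  | zero : Proc Act                       -- 0

/-- Branches of an internal choice. -/
inductive IBr {Act : Type} : Proc Act → Act → Proc Act → Prop where
  | send {a P} : IBr (Proc.send a P) a P
  | il {P Q a R} : IBr P a R → IBr (Proc.ichoice P Q) a R
  | ir {P Q a R} : IBr Q a R → IBr (Proc.ichoice P Q) a R

/-- Branches of an external choice. -/
inductive EBr {Act : Type} : Proc Act → Act → Proc Act → Prop where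
  | recv {a P} : EBr (Proc.recv a P) a P
  | el {P Q a R} : EBr P a R → EBr (Proc.echoice P Q) a R
  | er {P Q a R} : EBr Q a R → EBr (Proc.echoice P Q) a R

/-- Substitution of `Q` for de Bruijn variable `k`. -/
def subst {Act : Type} (Q : Proc Act) : ℕ → Proc Act → Proc Act
  | _, .success => .success
  | k, .send a P => .send a (subst Q k P)
  | k, .recv a P => .recv a (subst Q k P)
  | k, .ichoice P1 P2 => .ichoice (subst Q k P1) (subst Q k P2)
  | k, .echoice P1 P2 => .echoice (subst Q k P1) (subst Q k P2)
  | k, .var m => if m = k then Q else .var m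
  | k, .recur P => .recur (subst Q (k+1) P)
  | k, .comm a P => .comm a (subst Q k P)
  | k, .buf a P => .buf a (subst Q k P)
  | _, .zero => .zero

/-- Standard (reduction) semantics of compositions `P ∥ Q`. -/
inductive Step {Act : Type} : Proc Act × Proc Act → Proc Act × Proc Act → Prop where
  | commitL {P P' Q : Proc Act} {a : Act} : IBr P a P' → Step (P, Q) (Proc.comm a P', Q)
  | commitR {P Q Q' : Proc Act} {a : Act} : IBr Q a Q' → Step (P, Q) (P, Proc.comm a Q')
  | unfoldL {P Q : Proc Act} : Step (Proc.recur P, Q) (subst (Proc.recur P) 0 P, Q)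
  | unfoldR {P Q : Proc Act} : Step (P, Proc.recur Q) (P, subst (Proc.recur Q) 0 Q)
  | syncL {P Q Q' : Proc Act} {a : Act} : EBr Q a Q' → Step (Proc.comm a P, Q) (P, Q')
  | syncR {P P' Q : Proc Act} {a : Act} : EBr P a P' → Step (P, Proc.comm a Q) (P', Q)

/-- A stuck configuration. -/
def Stuck {Act : Type} (c : Proc Act × Proc Act) : Prop := ∀ c', ¬ Step c c'

/-- Compliance: every reachable stuck configuration has the client succeeded. -/
def Compliant {Act : Type} (P Q : Proc Act) : Prop :=
  ∀ c, Relation.ReflTransGen Step (P, Q) c → Stuck c → c.1 = Proc.success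

/-- Well-formed session types: `WF n U P` means free variables are `< n` and
variables satisfying `¬ U` may only occur guarded (under a prefix). -/
inductive WF {Act : Type} : ℕ → (ℕ → Prop) → Proc Act → Prop where
  | success {n U} : WF n U (Proc.success : Proc Act)
  | send {n U} {a : Act} {P} : WF n (fun _ => True) P → WF n U (Proc.send a P)
  | recv {n U} {a : Act} {P} : WF n (fun _ => True) P → WF n U (Proc.recv a P)
  | ichoice {n U} {P Q : Proc Act} : WF n U P → WF n U Q → WF n U (Proc.ichoice P Q)
  | echoice {n U} {P Q : Proc Act} : WF n U P → WF n U Q → WF n U (Proc.echoice P Q)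
  | var {n U m} : m < n → U m → WF n U (Proc.var m : Proc Act)
  | recur {n U} {P : Proc Act} : WF (n+1) (fun k => ∃ j, k = j + 1 ∧ U j) P → WF n U (Proc.recur P)

/-- Closed, guarded session types. -/
def WF0 {Act : Type} (P : Proc Act) : Prop := WF 0 (fun _ => False) P

/-- Labels of the event structures and of the turn-based semantics:
inputs `a`, outputs `ā`, and the success label ✓. -/
inductive Lbl (Act : Type) where
  | inp : Act → Lbl Act
  | out : Act → Lbl Act
  | tick : Lbl Act

/-- Turn-based labelled semantics with one-position buffers (recursion unfolded tacitly). -/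
inductive TStep {Act : Type} : Proc Act × Proc Act → Lbl Act → Proc Act × Proc Act → Prop where
  | outL {P P' R : Proc Act} {a : Act} : IBr P a P' → TStep (P, R) (Lbl.out a) (Proc.buf a P', R)
  | outR {P R R' : Proc Act} {a : Act} : IBr R a R' → TStep (P, R) (Lbl.out a) (P, Proc.buf a R')
  | inL {P P' R : Proc Act} {a : Act} : EBr P a P' → TStep (P, Proc.buf a R) (Lbl.inp a) (P', R)
  | inR {P R R' : Proc Act} {a : Act} : EBr R a R' → TStep (Proc.buf a P, R) (Lbl.inp a) (P, R')
  | tickL {P : Proc Act} : TStep (Proc.success, P) Lbl.tick (Proc.zero, P)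
  | tickR {P : Proc Act} : TStep (P, Proc.success) Lbl.tick (P, Proc.zero)
  | unfL {P Q c l} : TStep (subst (Proc.recur P) 0 P, Q) l c → TStep (Proc.recur P, Q) l c
  | unfR {P Q c l} : TStep (P, subst (Proc.recur Q) 0 Q) l c → TStep (P, Proc.recur Q) l c

/-! ### ES denotation of session types -/

/-- Canonical event renaming used for freshness: prepend `n` to the path. -/
def shiftE {Ppt : Type} (n : ℕ) : Ppt × List ℕ → Ppt × List ℕ := fun e => (e.1, n :: e.2)

/-- Rename all events of `E` by `shiftE n`. -/
def shiftES {Ppt Act : Type} (n : ℕ) (E : LES (Ppt × List ℕ) Act) : LES (Ppt × List ℕ) Act :=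
  ⟨shiftE n '' E.events,
   fun e e' => ∃ d d', e = shiftE n d ∧ e' = shiftE n d' ∧ E.conf d d',
   fun X e => ∃ Y d, X = shiftE n '' Y ∧ e = shiftE n d ∧ E.enab Y d,
   fun e a => ∃ d, e = shiftE n d ∧ E.lab d a⟩

/-- Prefixing with a fresh event `ea` labelled `α`. -/
def prefixES {Ev Act : Type} (ea : Ev) (α : Act) (E : LES Ev Act) : LES Ev Act :=
  ⟨insert ea E.events, E.conf,
   fun X e => (X = ∅ ∧ e = ea) ∨ ∃ Y, E.enab Y e ∧ X = insert ea Y,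
   fun e a => (e = ea ∧ a = α) ∨ E.lab e a⟩

/-- Choice: disjoint union with initial events of different branches in conflict. -/
def choiceES {Ev Act : Type} (E1 E2 : LES Ev Act) : LES Ev Act :=
  ⟨E1.events ∪ E2.events,
   fun e e' => E1.conf e e' ∨ E2.conf e e' ∨
     (E1.enab ∅ e ∧ E2.enab ∅ e') ∨ (E2.enab ∅ e ∧ E1.enab ∅ e'),
   fun X e => E1.enab X e ∨ E2.enab X e,
   fun e a => E1.lab e a ∨ E2.lab e a⟩

/-- Denotation of ✓: a single ✓-labelled enabled event of `A`. -/
def successES {Ppt Act : Type} (A : Ppt) : LES (Ppt × List ℕ) (Lbl Act) :=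
  ⟨{(A, ([] : List ℕ))}, fun _ _ => False,
   fun X e => X = ∅ ∧ e = (A, []),
   fun e l => e = (A, []) ∧ l = Lbl.tick⟩

/-- Extend an environment with a new denotation for variable 0. -/
def consEnv {Ev Act : Type} (E : LES Ev Act) (ρ : ℕ → LES Ev Act) : ℕ → LES Ev Act
  | 0 => E
  | k + 1 => ρ k

/-- ES denotation `⟦P⟧_A ρ` of a session type, all events owned by `A`. -/
def semST {Act Ppt : Type} (A : Ppt) :
    (ℕ → LES (Ppt × List ℕ) (Lbl Act)) → Proc Act → LES (Ppt × List ℕ) (Lbl Act)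
  | _, .success => successES A
  | ρ, .send a P => prefixES (A, []) (Lbl.out a) (shiftES 0 (semST A ρ P))
  | ρ, .recv a P => prefixES (A, []) (Lbl.inp a) (shiftES 0 (semST A ρ P))
  | ρ, .ichoice P Q => choiceES (shiftES 0 (semST A ρ P)) (shiftES 1 (semST A ρ Q))
  | ρ, .echoice P Q => choiceES (shiftES 0 (semST A ρ P)) (shiftES 1 (semST A ρ Q))
  | ρ, .var m => ρ m
  | ρ, .recur P => fixES (fun E => semST A (consEnv E ρ) P)
  | _, .comm _ _ => emptyES
  | _, .buf _ _ => emptyES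
  | _, .zero => emptyES

/-- The complementary label. -/
def coLbl {Act : Type} : Lbl Act → Lbl Act
  | .inp a => .out a
  | .out a => .inp a
  | .tick => .tick

/-- Co-actions (outputs and ✓). -/
def isCo {Act : Type} : Lbl Act → Prop
  | .inp _ => False
  | _ => True

/-- `e'` (in `Ei`) is matched by the synchronizing event `e''` (in `Ej`). -/
def LabMatch {Ev Act : Type} (Ei Ej : LES Ev (Lbl Act)) (e' e'' : Ev) : Prop :=
  ∃ l, Ei.lab e' l ∧ Ej.lab e'' (coLbl l)

/-- Composed enabling for a co-action event of side `i`. -/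
def parEnabCo {Ev Act : Type} (Ei Ej : LES Ev (Lbl Act)) (Z : Set Ev) (e : Ev) : Prop :=
  ∃ X Y, Ei.enab X e ∧ (∃ l, Ei.lab e l ∧ isCo l) ∧ Y ⊆ Ej.events ∧
    (∀ e' ∈ X, ∃ e'' ∈ Y, LabMatch Ei Ej e' e'') ∧ Z = X ∪ Y

/-- Composed enabling for an input event of side `i` (needs its own co-event `eh`). -/
def parEnabIn {Ev Act : Type} (Ei Ej : LES Ev (Lbl Act)) (Z : Set Ev) (e : Ev) : Prop :=
  ∃ X Y eh a, Ei.enab X e ∧ Ei.lab e (Lbl.inp a) ∧ Y ⊆ Ej.events ∧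
    eh ∈ Ej.events ∧ Ej.lab eh (Lbl.out a) ∧
    (∀ e' ∈ X, ∃ e'' ∈ Y, LabMatch Ei Ej e' e'') ∧ Z = X ∪ Y ∪ {eh}

/-- ES denotation of a composition `P₁ ∥ P₂`, given the two sides. -/
def parES {Ev Act : Type} (E1 E2 : LES Ev (Lbl Act)) : LES Ev (Lbl Act) :=
  ⟨E1.events ∪ E2.events,
   fun e e' => E1.conf e e' ∨ E2.conf e e',
   fun Z e => parEnabCo E1 E2 Z e ∨ parEnabCo E2 E1 Z e ∨
              parEnabIn E1 E2 Z e ∨ parEnabIn E2 E1 Z e,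
   fun e l => E1.lab e l ∨ E2.lab e l⟩

/-- Transitions of the LTS `ETS(E)`: fire an `∅`-enabled event, pass to the remainder. -/
def ETStep {Ev Act : Type} (E : LES Ev Act) (l : Act) (E' : LES Ev Act) : Prop :=
  ∃ e, E.enab ∅ e ∧ E.lab e l ∧ E' = remainder E e

/-- Payoff of `A`: finite plays must contain a ✓-labelled event of `A`. -/
def payoffOf {Act Ppt : Type} (A : Ppt) (E : LES (Ppt × List ℕ) (Lbl Act)) :
    Set (ℕ → Option (Ppt × List ℕ)) :=
  {σ | (∃ i, σ i = none) → ∃ j e, σ j = some e ∧ e.1 = A ∧ E.lab e Lbl.tick}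

/-- The contract `𝓒_A(P)` of a session type. -/
noncomputable def contractOf {Act Ppt : Type} [DecidableEq Ppt] (A : Ppt) (P : Proc Act) :
    Contract (Ppt × List ℕ) (Lbl Act) Ppt :=
  ⟨semST A (fun _ => emptyES) P,
   fun X => if X = A then some (payoffOf A (semST A (fun _ => emptyES) P)) else none⟩

/-- Composition of (session-type) contracts: the game is played on the composed ES. -/
noncomputable def ccomp {Ev Act Ppt : Type} (C C' : Contract Ev (Lbl Act) Ppt) :
    Contract Ev (Lbl Act) Ppt :=
  ⟨parES C.es C'.es, fun X => (C.payoff X).orElse (fun _ => C'.payoff X)⟩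

/-- Recursion-free (and variable-free) session types. -/
inductive NoRec {Act : Type} : Proc Act → Prop where
  | success : NoRec (Proc.success : Proc Act)
  | send {a : Act} {P} : NoRec P → NoRec (Proc.send a P)
  | recv {a : Act} {P} : NoRec P → NoRec (Proc.recv a P)
  | ichoice {P Q : Proc Act} : NoRec P → NoRec Q → NoRec (Proc.ichoice P Q)
  | echoice {P Q : Proc Act} : NoRec P → NoRec Q → NoRec (Proc.echoice P Q)

end ESC

namespace ESC
section Agr
set_option linter.unusedSectionVars false
variable {Act Ppt : Type} [DecidableEq Ppt]

/-- the 2-event chain `α.✓` -/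
def ch2 (A : Ppt) (α : Lbl Act) : LES (Ppt × List ℕ) (Lbl Act) :=
  prefixES (A,[]) α (shiftES 0 (successES A))

lemma ch2_enab (A : Ppt) (α : Lbl Act) (n : ℕ) (X : Set (Ppt × List ℕ)) (e : Ppt × List ℕ) :
    (shiftES n (ch2 A α)).enab X e ↔
      (X = ∅ ∧ e = (A,[n])) ∨ (X = {(A,[n])} ∧ e = (A,[n,0])) := by
  simp only [ch2, shiftES, prefixES, successES, shiftE]
  constructor
  · rintro ⟨Y,d,hX,he,(⟨rfl,rfl⟩|⟨Y1,⟨Y2,d1,rfl,rfl,rfl,rfl⟩,rfl⟩)⟩ <;> subst hX <;> subst he <;>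
      simp [Set.image_insert_eq, shiftE]
  · rintro (⟨rfl,rfl⟩|⟨rfl,rfl⟩)
    · exact ⟨∅, (A,[]), by simp, rfl, Or.inl ⟨rfl, rfl⟩⟩
    · exact ⟨{(A,[])}, (A,[0]), by simp [Set.image_singleton, shiftE], rfl,
        Or.inr ⟨∅, ⟨∅, (A,[]), by simp, rfl, rfl, rfl⟩, by simp⟩⟩

lemma ch2_lab (A : Ppt) (α : Lbl Act) (n : ℕ) (e : Ppt × List ℕ) (l : Lbl Act) :
    (shiftES n (ch2 A α)).lab e l ↔
      (e = (A,[n]) ∧ l = α) ∨ (e = (A,[n,0]) ∧ l = Lbl.tick) := by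
  simp only [ch2, shiftES, prefixES, successES, shiftE]
  constructor
  · rintro ⟨d,he,(⟨rfl,rfl⟩|⟨d1,rfl,rfl,rfl⟩)⟩ <;> subst he <;> simp
  · rintro (⟨rfl,rfl⟩|⟨rfl,rfl⟩)
    · exact ⟨(A,[]), rfl, Or.inl ⟨rfl, rfl⟩⟩
    · exact ⟨(A,[0]), rfl, Or.inr ⟨(A,[]), rfl, rfl, rfl⟩⟩

lemma ch2_conf (A : Ppt) (α : Lbl Act) (n : ℕ) (x y : Ppt × List ℕ) :
    ¬ (shiftES n (ch2 A α)).conf x y := by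
  simp only [ch2, shiftES, prefixES, successES, shiftE]
  rintro ⟨d,d',_,_,⟨d1,d1',_,_,h⟩⟩; exact h

lemma ch2_events (A : Ppt) (α : Lbl Act) (n : ℕ) :
    (shiftES n (ch2 A α)).events = {(A,[n]),(A,[n,0])} := by
  simp only [ch2, shiftES, prefixES, successES, shiftE]
  ext e
  simp [Set.image_insert_eq, shiftE]




def ch3 (A : Ppt) (α β : Lbl Act) : LES (Ppt × List ℕ) (Lbl Act) :=
  shiftES 0 (prefixES (A,[]) α (shiftES 0 (ch2 A β)))

lemma ch3_enab (A : Ppt) (α β : Lbl Act) (X : Set (Ppt × List ℕ)) (e : Ppt × List ℕ) :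
    (ch3 A α β).enab X e ↔
      (X = ∅ ∧ e = (A,[0])) ∨ (X = {(A,[0])} ∧ e = (A,[0,0])) ∨
      (X = {(A,[0]),(A,[0,0])} ∧ e = (A,[0,0,0])) := by
  show (∃ Y d, X = shiftE 0 '' Y ∧ e = shiftE 0 d ∧ (prefixES (A,[]) α (shiftES 0 (ch2 A β))).enab Y d) ↔ _
  simp only [prefixES]
  constructor
  · rintro ⟨Y,d,hX,he,(⟨rfl,rfl⟩|⟨Y1,h1,rfl⟩)⟩
    · subst hX he; simp [shiftE]
    · rw [ch2_enab] at h1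
      rcases h1 with ⟨rfl,rfl⟩|⟨rfl,rfl⟩ <;> subst hX <;> subst he <;>
        simp [Set.image_insert_eq, shiftE]
  · rintro (⟨rfl,rfl⟩|⟨rfl,rfl⟩|⟨rfl,rfl⟩)
    · exact ⟨∅, (A,[]), by simp, rfl, Or.inl ⟨rfl, rfl⟩⟩
    · exact ⟨{(A,[])}, (A,[0]), by simp [shiftE], rfl,
        Or.inr ⟨∅, (ch2_enab A β 0 ∅ (A,[0])).2 (Or.inl ⟨rfl,rfl⟩), by simp⟩⟩
    · exact ⟨{(A,[]),(A,[0])}, (A,[0,0]), by simp [Set.image_insert_eq, shiftE], rfl,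
        Or.inr ⟨{(A,[0])}, (ch2_enab A β 0 _ (A,[0,0])).2 (Or.inr ⟨rfl,rfl⟩), by simp⟩⟩

lemma ch3_lab (A : Ppt) (α β : Lbl Act) (e : Ppt × List ℕ) (l : Lbl Act) :
    (ch3 A α β).lab e l ↔
      (e = (A,[0]) ∧ l = α) ∨ (e = (A,[0,0]) ∧ l = β) ∨ (e = (A,[0,0,0]) ∧ l = Lbl.tick) := by
  show (∃ d, e = shiftE 0 d ∧ (prefixES (A,[]) α (shiftES 0 (ch2 A β))).lab d l) ↔ _
  simp only [prefixES]
  constructor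
  · rintro ⟨d,he,(⟨rfl,rfl⟩|h1)⟩
    · subst he; simp [shiftE]
    · rw [ch2_lab] at h1
      rcases h1 with ⟨rfl,rfl⟩|⟨rfl,rfl⟩ <;> subst he <;> simp [shiftE]
  · rintro (⟨rfl,rfl⟩|⟨rfl,rfl⟩|⟨rfl,rfl⟩)
    · exact ⟨(A,[]), rfl, Or.inl ⟨rfl, rfl⟩⟩
    · exact ⟨(A,[0]), rfl, Or.inr ((ch2_lab A _ 0 (A,[0]) _).2 (Or.inl ⟨rfl,rfl⟩))⟩
    · exact ⟨(A,[0,0]), rfl, Or.inr ((ch2_lab A _ 0 (A,[0,0]) _).2 (Or.inr ⟨rfl,rfl⟩))⟩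

lemma ch3_conf (A : Ppt) (α β : Lbl Act) (x y : Ppt × List ℕ) :
    ¬ (ch3 A α β).conf x y := by
  rintro ⟨d,d',-,-,h⟩
  exact ch2_conf A β 0 _ _ h

lemma ch3_events (A : Ppt) (α β : Lbl Act) :
    (ch3 A α β).events = {(A,[0]),(A,[0,0]),(A,[0,0,0])} := by
  show shiftE 0 '' (insert (A,[]) (shiftES 0 (ch2 A β)).events) = _
  rw [show (shiftES 0 (ch2 A β)).events = (shiftES 0 (ch2 A β)).events from rfl, ch2_events]
  ext e
  simp [Set.image_insert_eq, shiftE]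
def EAes (A : Ppt) (a b c : Act) : LES (Ppt × List ℕ) (Lbl Act) :=
  semST A (fun _ => emptyES)
    (Proc.ichoice (Proc.send a (Proc.send c Proc.success)) (Proc.send b Proc.success))

def EBes (B : Ppt) (a b : Act) : LES (Ppt × List ℕ) (Lbl Act) :=
  semST B (fun _ => emptyES)
    (Proc.echoice (Proc.recv a Proc.success) (Proc.recv b Proc.success))

lemma EAes_def (A : Ppt) (a b c : Act) :
    EAes A a b c = choiceES (ch3 A (Lbl.out a) (Lbl.out c)) (shiftES 1 (ch2 A (Lbl.out b))) := rfl

lemma EBes_def (B : Ppt) (a b : Act) :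
    EBes B a b = choiceES (shiftES 0 (ch2 B (Lbl.inp a))) (shiftES 1 (ch2 B (Lbl.inp b))) := rfl

lemma EA_enab (A : Ppt) (a b c : Act) (X : Set (Ppt × List ℕ)) (e : Ppt × List ℕ) :
    (EAes A a b c).enab X e ↔
      (X = ∅ ∧ e = (A,[0])) ∨ (X = {(A,[0])} ∧ e = (A,[0,0])) ∨
      (X = {(A,[0]),(A,[0,0])} ∧ e = (A,[0,0,0])) ∨
      (X = ∅ ∧ e = (A,[1])) ∨ (X = {(A,[1])} ∧ e = (A,[1,0])) := by
  rw [EAes_def]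
  show (ch3 A (Lbl.out a) (Lbl.out c)).enab X e ∨ (shiftES 1 (ch2 A (Lbl.out b))).enab X e ↔ _
  rw [ch3_enab, ch2_enab]; tauto

lemma EB_enab (B : Ppt) (a b : Act) (X : Set (Ppt × List ℕ)) (e : Ppt × List ℕ) :
    (EBes B a b).enab X e ↔
      (X = ∅ ∧ e = (B,[0])) ∨ (X = {(B,[0])} ∧ e = (B,[0,0])) ∨
      (X = ∅ ∧ e = (B,[1])) ∨ (X = {(B,[1])} ∧ e = (B,[1,0])) := by
  rw [EBes_def]
  show (shiftES 0 (ch2 B (Lbl.inp a))).enab X e ∨ (shiftES 1 (ch2 B (Lbl.inp b))).enab X e ↔ _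
  rw [ch2_enab, ch2_enab]; tauto

lemma EA_lab (A : Ppt) (a b c : Act) (e : Ppt × List ℕ) (l : Lbl Act) :
    (EAes A a b c).lab e l ↔
      (e = (A,[0]) ∧ l = Lbl.out a) ∨ (e = (A,[0,0]) ∧ l = Lbl.out c) ∨
      (e = (A,[0,0,0]) ∧ l = Lbl.tick) ∨
      (e = (A,[1]) ∧ l = Lbl.out b) ∨ (e = (A,[1,0]) ∧ l = Lbl.tick) := by
  rw [EAes_def]
  show (ch3 A (Lbl.out a) (Lbl.out c)).lab e l ∨ (shiftES 1 (ch2 A (Lbl.out b))).lab e l ↔ _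
  rw [ch3_lab, ch2_lab]; tauto

lemma EB_lab (B : Ppt) (a b : Act) (e : Ppt × List ℕ) (l : Lbl Act) :
    (EBes B a b).lab e l ↔
      (e = (B,[0]) ∧ l = Lbl.inp a) ∨ (e = (B,[0,0]) ∧ l = Lbl.tick) ∨
      (e = (B,[1]) ∧ l = Lbl.inp b) ∨ (e = (B,[1,0]) ∧ l = Lbl.tick) := by
  rw [EBes_def]
  show (shiftES 0 (ch2 B (Lbl.inp a))).lab e l ∨ (shiftES 1 (ch2 B (Lbl.inp b))).lab e l ↔ _
  rw [ch2_lab, ch2_lab]; tauto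

lemma EA_events (A : Ppt) (a b c : Act) :
    (EAes A a b c).events = {(A,[0]),(A,[0,0]),(A,[0,0,0]),(A,[1]),(A,[1,0])} := by
  rw [EAes_def]
  show (ch3 A (Lbl.out a) (Lbl.out c)).events ∪ (shiftES 1 (ch2 A (Lbl.out b))).events = _
  rw [ch3_events, ch2_events]; ext x; simp; tauto

lemma EB_events (B : Ppt) (a b : Act) :
    (EBes B a b).events = {(B,[0]),(B,[0,0]),(B,[1]),(B,[1,0])} := by
  rw [EBes_def]
  show (shiftES 0 (ch2 B (Lbl.inp a))).events ∪ (shiftES 1 (ch2 B (Lbl.inp b))).events = _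
  rw [ch2_events, ch2_events]; ext x; simp; tauto

lemma EA_conf (A : Ppt) (a b c : Act) (x y : Ppt × List ℕ) :
    (EAes A a b c).conf x y ↔
      (x = (A,[0]) ∧ y = (A,[1])) ∨ (x = (A,[1]) ∧ y = (A,[0])) := by
  rw [EAes_def]
  show (ch3 A (Lbl.out a) (Lbl.out c)).conf x y ∨ (shiftES 1 (ch2 A (Lbl.out b))).conf x y ∨
    ((ch3 A (Lbl.out a) (Lbl.out c)).enab ∅ x ∧ (shiftES 1 (ch2 A (Lbl.out b))).enab ∅ y) ∨
    ((shiftES 1 (ch2 A (Lbl.out b))).enab ∅ x ∧ (ch3 A (Lbl.out a) (Lbl.out c)).enab ∅ y) ↔ _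
  constructor
  · rintro (h|h|⟨h1,h2⟩|⟨h1,h2⟩)
    · exact absurd h (ch3_conf A _ _ x y)
    · exact absurd h (ch2_conf A _ 1 x y)
    · rw [ch3_enab] at h1; rw [ch2_enab] at h2
      rcases h2 with ⟨_,rfl⟩|⟨h',_⟩
      · rcases h1 with ⟨_,rfl⟩|⟨h,_⟩|⟨h,_⟩
        · exact Or.inl ⟨rfl,rfl⟩
        · exact absurd h.symm (by first | exact Set.singleton_ne_empty _ | exact Set.insert_nonempty _ _ |>.ne_empty)
        · exact absurd h.symm (by first | exact Set.singleton_ne_empty _ | exact Set.insert_nonempty _ _ |>.ne_empty)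
      · exact absurd h'.symm (by first | exact Set.singleton_ne_empty _ | exact Set.insert_nonempty _ _ |>.ne_empty)
    · rw [ch2_enab] at h1; rw [ch3_enab] at h2
      rcases h2 with ⟨_,rfl⟩|⟨h',_⟩|⟨h',_⟩
      · rcases h1 with ⟨_,rfl⟩|⟨h,_⟩
        · exact Or.inr ⟨rfl,rfl⟩
        · exact absurd h.symm (by first | exact Set.singleton_ne_empty _ | exact Set.insert_nonempty _ _ |>.ne_empty)
      · exact absurd h'.symm (by first | exact Set.singleton_ne_empty _ | exact Set.insert_nonempty _ _ |>.ne_empty)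
      · exact absurd h'.symm (by first | exact Set.singleton_ne_empty _ | exact Set.insert_nonempty _ _ |>.ne_empty)
  · rintro (⟨rfl,rfl⟩|⟨rfl,rfl⟩)
    · exact Or.inr (Or.inr (Or.inl ⟨(ch3_enab A _ _ ∅ _).2 (Or.inl ⟨rfl,rfl⟩),
        (ch2_enab A _ 1 ∅ _).2 (Or.inl ⟨rfl,rfl⟩)⟩))
    · exact Or.inr (Or.inr (Or.inr ⟨(ch2_enab A _ 1 ∅ _).2 (Or.inl ⟨rfl,rfl⟩),
        (ch3_enab A _ _ ∅ _).2 (Or.inl ⟨rfl,rfl⟩)⟩))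

lemma EB_conf (B : Ppt) (a b : Act) (x y : Ppt × List ℕ) :
    (EBes B a b).conf x y ↔
      (x = (B,[0]) ∧ y = (B,[1])) ∨ (x = (B,[1]) ∧ y = (B,[0])) := by
  rw [EBes_def]
  show (shiftES 0 (ch2 B (Lbl.inp a))).conf x y ∨ (shiftES 1 (ch2 B (Lbl.inp b))).conf x y ∨
    ((shiftES 0 (ch2 B (Lbl.inp a))).enab ∅ x ∧ (shiftES 1 (ch2 B (Lbl.inp b))).enab ∅ y) ∨
    ((shiftES 1 (ch2 B (Lbl.inp b))).enab ∅ x ∧ (shiftES 0 (ch2 B (Lbl.inp a))).enab ∅ y) ↔ _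
  constructor
  · rintro (h|h|⟨h1,h2⟩|⟨h1,h2⟩)
    · exact absurd h (ch2_conf B _ 0 x y)
    · exact absurd h (ch2_conf B _ 1 x y)
    · rw [ch2_enab] at h1 h2
      rcases h1 with ⟨_,rfl⟩|⟨h,_⟩
      · rcases h2 with ⟨_,rfl⟩|⟨h',_⟩
        · exact Or.inl ⟨rfl,rfl⟩
        · exact absurd h'.symm (by first | exact Set.singleton_ne_empty _ | exact Set.insert_nonempty _ _ |>.ne_empty)
      · exact absurd h.symm (by first | exact Set.singleton_ne_empty _ | exact Set.insert_nonempty _ _ |>.ne_empty)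
    · rw [ch2_enab] at h1 h2
      rcases h1 with ⟨_,rfl⟩|⟨h,_⟩
      · rcases h2 with ⟨_,rfl⟩|⟨h',_⟩
        · exact Or.inr ⟨rfl,rfl⟩
        · exact absurd h'.symm (by first | exact Set.singleton_ne_empty _ | exact Set.insert_nonempty _ _ |>.ne_empty)
      · exact absurd h.symm (by first | exact Set.singleton_ne_empty _ | exact Set.insert_nonempty _ _ |>.ne_empty)
  · rintro (⟨rfl,rfl⟩|⟨rfl,rfl⟩)
    · exact Or.inr (Or.inr (Or.inl ⟨(ch2_enab B _ 0 ∅ _).2 (Or.inl ⟨rfl,rfl⟩),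
        (ch2_enab B _ 1 ∅ _).2 (Or.inl ⟨rfl,rfl⟩)⟩))
    · exact Or.inr (Or.inr (Or.inr ⟨(ch2_enab B _ 1 ∅ _).2 (Or.inl ⟨rfl,rfl⟩),
        (ch2_enab B _ 0 ∅ _).2 (Or.inl ⟨rfl,rfl⟩)⟩))

def Ees (A B : Ppt) (a b c : Act) : LES (Ppt × List ℕ) (Lbl Act) :=
  parES (EAes A a b c) (EBes B a b)

variable (A B : Ppt) (a b c : Act)

lemma E_conf (x y : Ppt × List ℕ) :
    (Ees A B a b c).conf x y ↔
      (x = (A,[0]) ∧ y = (A,[1])) ∨ (x = (A,[1]) ∧ y = (A,[0])) ∨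
      (x = (B,[0]) ∧ y = (B,[1])) ∨ (x = (B,[1]) ∧ y = (B,[0])) := by
  show (EAes A a b c).conf x y ∨ (EBes B a b).conf x y ↔ _
  rw [EA_conf, EB_conf]; tauto

lemma E_lab (e : Ppt × List ℕ) (l : Lbl Act) :
    (Ees A B a b c).lab e l ↔ (EAes A a b c).lab e l ∨ (EBes B a b).lab e l := Iff.rfl

lemma E_enab (hAB : A ≠ B) (hab : a ≠ b) (hac : a ≠ c) (hbc : b ≠ c)
    (Z : Set (Ppt × List ℕ)) (e : Ppt × List ℕ) :
    (Ees A B a b c).enab Z e ↔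
      (e = (A,[0]) ∧ Z ⊆ (EBes B a b).events) ∨
      (e = (A,[1]) ∧ Z ⊆ (EBes B a b).events) ∨
      (e = (A,[0,0]) ∧ (A,[0]) ∈ Z ∧ (B,[0]) ∈ Z ∧ Z ⊆ insert (A,[0]) (EBes B a b).events) ∨
      (e = (A,[1,0]) ∧ (A,[1]) ∈ Z ∧ (B,[1]) ∈ Z ∧ Z ⊆ insert (A,[1]) (EBes B a b).events) ∨
      (e = (B,[0,0]) ∧ (B,[0]) ∈ Z ∧ (A,[0]) ∈ Z ∧ Z ⊆ insert (B,[0]) (EAes A a b c).events) ∨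
      (e = (B,[1,0]) ∧ (B,[1]) ∈ Z ∧ (A,[1]) ∈ Z ∧ Z ⊆ insert (B,[1]) (EAes A a b c).events) ∨
      (e = (B,[0]) ∧ (A,[0]) ∈ Z ∧ Z ⊆ (EAes A a b c).events) ∨
      (e = (B,[1]) ∧ (A,[1]) ∈ Z ∧ Z ⊆ (EAes A a b c).events) := by
  have hBA : B ≠ A := hAB.symm
  constructor
  · rintro (⟨X,Y,hX,⟨l,hl,hco⟩,hY,hm,rfl⟩|⟨X,Y,hX,⟨l,hl,hco⟩,hY,hm,rfl⟩|
            ⟨X,Y,eh,a',hX,hlab,hY,heh,hlabh,hm,rfl⟩|⟨X,Y,eh,a',hX,hlab,hY,heh,hlabh,hm,rfl⟩)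
    · -- parEnabCo EA EB
      rw [EA_enab] at hX
      rcases hX with ⟨rfl,rfl⟩|⟨rfl,rfl⟩|⟨rfl,rfl⟩|⟨rfl,rfl⟩|⟨rfl,rfl⟩
      · exact Or.inl ⟨rfl, by simpa using hY⟩
      · -- e = (A,[0,0])
        obtain ⟨e'', he'', l', hl1, hl2⟩ := hm (A,[0]) rfl
        rw [EA_lab] at hl1
        rcases hl1 with ⟨_,rfl⟩|⟨h,_⟩|⟨h,_⟩|⟨h,_⟩|⟨h,_⟩ <;> try simp at h
        rw [show coLbl (Lbl.out a) = Lbl.inp a from rfl, EB_lab] at hl2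
        rcases hl2 with ⟨rfl,_⟩|⟨_,h⟩|⟨_,h⟩|⟨_,h⟩
        · refine Or.inr (Or.inr (Or.inl ⟨rfl, by simp, Or.inr he'', fun x hx => ?_⟩))
          rcases hx with rfl|hx
          · exact Set.mem_insert _ _
          · exact Set.mem_insert_of_mem _ (hY hx)
        · simp at h
        · simp [hab, hab.symm, hac, hac.symm, hbc, hbc.symm] at h
        · simp at h
      · -- e = (A,[0,0,0]) : impossible
        obtain ⟨e'', he'', l', hl1, hl2⟩ := hm (A,[0,0]) (Or.inr rfl)
        rw [EA_lab] at hl1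
        rcases hl1 with ⟨h,_⟩|⟨_,rfl⟩|⟨h,_⟩|⟨h,_⟩|⟨h,_⟩ <;> try simp at h
        rw [show coLbl (Lbl.out c) = Lbl.inp c from rfl, EB_lab] at hl2
        rcases hl2 with ⟨_,h⟩|⟨_,h⟩|⟨_,h⟩|⟨_,h⟩ <;> simp [hab, hab.symm, hac, hac.symm, hbc, hbc.symm] at h
      · exact Or.inr (Or.inl ⟨rfl, by simpa using hY⟩)
      · -- e = (A,[1,0])
        obtain ⟨e'', he'', l', hl1, hl2⟩ := hm (A,[1]) rfl
        rw [EA_lab] at hl1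
        rcases hl1 with ⟨h,_⟩|⟨h,_⟩|⟨h,_⟩|⟨_,rfl⟩|⟨h,_⟩ <;> try simp at h
        rw [show coLbl (Lbl.out b) = Lbl.inp b from rfl, EB_lab] at hl2
        rcases hl2 with ⟨_,h⟩|⟨_,h⟩|⟨rfl,_⟩|⟨_,h⟩
        · simp [hab, hab.symm, hac, hac.symm, hbc, hbc.symm] at h
        · simp at h
        · refine Or.inr (Or.inr (Or.inr (Or.inl ⟨rfl, by simp, Or.inr he'', fun x hx => ?_⟩)))
          rcases hx with rfl|hx
          · exact Set.mem_insert _ _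
          · exact Set.mem_insert_of_mem _ (hY hx)
        · simp at h
    · -- parEnabCo EB EA
      rw [EB_enab] at hX
      rcases hX with ⟨rfl,rfl⟩|⟨rfl,rfl⟩|⟨rfl,rfl⟩|⟨rfl,rfl⟩
      · -- e = (B,[0]) : label inp a, not co
        rw [EB_lab] at hl
        rcases hl with ⟨_,rfl⟩|⟨h,_⟩|⟨h,_⟩|⟨h,_⟩ <;> first | exact hco.elim | simp at h
      · -- e = (B,[0,0])
        obtain ⟨e'', he'', l', hl1, hl2⟩ := hm (B,[0]) rfl
        rw [EB_lab] at hl1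
        rcases hl1 with ⟨_,rfl⟩|⟨h,_⟩|⟨h,_⟩|⟨h,_⟩ <;> try simp at h
        rw [show coLbl (Lbl.inp a) = Lbl.out a from rfl, EA_lab] at hl2
        rcases hl2 with ⟨rfl,_⟩|⟨_,h⟩|⟨_,h⟩|⟨_,h⟩|⟨_,h⟩
        · refine Or.inr (Or.inr (Or.inr (Or.inr (Or.inl ⟨rfl, by simp, Or.inr he'', fun x hx => ?_⟩))))
          rcases hx with rfl|hx
          · exact Set.mem_insert _ _
          · exact Set.mem_insert_of_mem _ (hY hx)
        · simp [hab, hab.symm, hac, hac.symm, hbc, hbc.symm] at h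
        · simp at h
        · simp [hab, hab.symm, hac, hac.symm, hbc, hbc.symm] at h
        · simp at h
      · rw [EB_lab] at hl
        rcases hl with ⟨h,_⟩|⟨h,_⟩|⟨_,rfl⟩|⟨h,_⟩ <;> first | exact hco.elim | simp at h
      · -- e = (B,[1,0])
        obtain ⟨e'', he'', l', hl1, hl2⟩ := hm (B,[1]) rfl
        rw [EB_lab] at hl1
        rcases hl1 with ⟨h,_⟩|⟨h,_⟩|⟨_,rfl⟩|⟨h,_⟩ <;> try simp at h
        rw [show coLbl (Lbl.inp b) = Lbl.out b from rfl, EA_lab] at hl2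
        rcases hl2 with ⟨_,h⟩|⟨_,h⟩|⟨_,h⟩|⟨rfl,_⟩|⟨_,h⟩
        · simp [hab, hab.symm, hac, hac.symm, hbc, hbc.symm] at h
        · simp [hab, hab.symm, hac, hac.symm, hbc, hbc.symm] at h
        · simp at h
        · refine Or.inr (Or.inr (Or.inr (Or.inr (Or.inr (Or.inl
            ⟨rfl, by simp, Or.inr he'', fun x hx => ?_⟩)))))
          rcases hx with rfl|hx
          · exact Set.mem_insert _ _
          · exact Set.mem_insert_of_mem _ (hY hx)
        · simp at h
    · -- parEnabIn EA EB : impossible, EA has no inputs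
      rw [EA_lab] at hlab
      rcases hlab with ⟨_,h⟩|⟨_,h⟩|⟨_,h⟩|⟨_,h⟩|⟨_,h⟩ <;> simp at h
    · -- parEnabIn EB EA
      rw [EB_enab] at hX
      rcases hX with ⟨rfl,rfl⟩|⟨rfl,rfl⟩|⟨rfl,rfl⟩|⟨rfl,rfl⟩
      · -- e = (B,[0])
        rw [EB_lab] at hlab
        rcases hlab with ⟨_,h⟩|⟨h,_⟩|⟨h,_⟩|⟨h,_⟩ <;> try simp at h
        obtain rfl : a' = a := by simpa using h
        rw [EA_lab] at hlabh
        rcases hlabh with ⟨rfl,_⟩|⟨_,h'⟩|⟨_,h'⟩|⟨_,h'⟩|⟨_,h'⟩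
        · refine Or.inr (Or.inr (Or.inr (Or.inr (Or.inr (Or.inr (Or.inl
            ⟨rfl, by simp, fun x hx => ?_⟩))))))
          rcases hx with (hx|hx)|rfl
          · exact absurd hx (Set.notMem_empty x)
          · exact hY hx
          · rw [EA_events]; simp
        · simp [hab, hab.symm, hac, hac.symm, hbc, hbc.symm] at h'
        · simp at h'
        · simp [hab, hab.symm, hac, hac.symm, hbc, hbc.symm] at h'
        · simp at h'
      · rw [EB_lab] at hlab
        rcases hlab with ⟨h,_⟩|⟨_,h⟩|⟨h,_⟩|⟨_,h⟩ <;> simp at h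
      · -- e = (B,[1])
        rw [EB_lab] at hlab
        rcases hlab with ⟨h,_⟩|⟨h,_⟩|⟨_,h⟩|⟨h,_⟩ <;> try simp at h
        obtain rfl : a' = b := by simpa using h
        rw [EA_lab] at hlabh
        rcases hlabh with ⟨_,h'⟩|⟨_,h'⟩|⟨_,h'⟩|⟨rfl,_⟩|⟨_,h'⟩
        · simp [hab, hab.symm, hac, hac.symm, hbc, hbc.symm] at h'
        · simp [hab, hab.symm, hac, hac.symm, hbc, hbc.symm] at h'
        · simp at h'
        · refine Or.inr (Or.inr (Or.inr (Or.inr (Or.inr (Or.inr (Or.inr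
            ⟨rfl, by simp, fun x hx => ?_⟩))))))
          rcases hx with (hx|hx)|rfl
          · exact absurd hx (Set.notMem_empty x)
          · exact hY hx
          · rw [EA_events]; simp
        · simp at h'
      · rw [EB_lab] at hlab
        rcases hlab with ⟨h,_⟩|⟨_,h⟩|⟨h,_⟩|⟨_,h⟩ <;> simp at h
  · rintro (⟨rfl,hZ⟩|⟨rfl,hZ⟩|⟨rfl,h1,h2,hZ⟩|⟨rfl,h1,h2,hZ⟩|⟨rfl,h1,h2,hZ⟩|⟨rfl,h1,h2,hZ⟩|
            ⟨rfl,h1,hZ⟩|⟨rfl,h1,hZ⟩)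
    · exact Or.inl ⟨∅, Z, (EA_enab ..).2 (Or.inl ⟨rfl,rfl⟩),
        ⟨Lbl.out a, (EA_lab ..).2 (Or.inl ⟨rfl,rfl⟩), trivial⟩, hZ,
        fun x hx => absurd hx (Set.notMem_empty x), (Set.empty_union Z).symm⟩
    · exact Or.inl ⟨∅, Z, (EA_enab ..).2 (Or.inr (Or.inr (Or.inr (Or.inl ⟨rfl,rfl⟩)))),
        ⟨Lbl.out b, (EA_lab ..).2 (Or.inr (Or.inr (Or.inr (Or.inl ⟨rfl,rfl⟩)))), trivial⟩, hZ,
        fun x hx => absurd hx (Set.notMem_empty x), (Set.empty_union Z).symm⟩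
    · refine Or.inl ⟨{(A,[0])}, Z \ {(A,[0])},
        (EA_enab ..).2 (Or.inr (Or.inl ⟨rfl,rfl⟩)),
        ⟨Lbl.out c, (EA_lab ..).2 (Or.inr (Or.inl ⟨rfl,rfl⟩)), trivial⟩,
        fun x hx => ((hZ hx.1).resolve_left hx.2), ?_, ?_⟩
      · rintro x rfl
        exact ⟨(B,[0]), ⟨h2, by simp [hBA]⟩, Lbl.out a, (EA_lab ..).2 (Or.inl ⟨rfl,rfl⟩),
          (EB_lab ..).2 (Or.inl ⟨rfl,rfl⟩)⟩
      · ext x; by_cases hx : x = (A,[0]) <;> simp [hx, h1]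
    · refine Or.inl ⟨{(A,[1])}, Z \ {(A,[1])},
        (EA_enab ..).2 (Or.inr (Or.inr (Or.inr (Or.inr ⟨rfl,rfl⟩)))),
        ⟨Lbl.tick, (EA_lab ..).2 (Or.inr (Or.inr (Or.inr (Or.inr ⟨rfl,rfl⟩)))), trivial⟩,
        fun x hx => ((hZ hx.1).resolve_left hx.2), ?_, ?_⟩
      · rintro x rfl
        exact ⟨(B,[1]), ⟨h2, by simp [hBA]⟩, Lbl.out b, (EA_lab ..).2 (Or.inr (Or.inr (Or.inr (Or.inl ⟨rfl,rfl⟩)))),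
          (EB_lab ..).2 (Or.inr (Or.inr (Or.inl ⟨rfl,rfl⟩)))⟩
      · ext x; by_cases hx : x = (A,[1]) <;> simp [hx, h1]
    · refine Or.inr (Or.inl ⟨{(B,[0])}, Z \ {(B,[0])},
        (EB_enab ..).2 (Or.inr (Or.inl ⟨rfl,rfl⟩)),
        ⟨Lbl.tick, (EB_lab ..).2 (Or.inr (Or.inl ⟨rfl,rfl⟩)), trivial⟩,
        fun x hx => ((hZ hx.1).resolve_left hx.2), ?_, ?_⟩)
      · rintro x rfl
        exact ⟨(A,[0]), ⟨h2, by simp [hAB]⟩, Lbl.inp a, (EB_lab ..).2 (Or.inl ⟨rfl,rfl⟩),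
          (EA_lab ..).2 (Or.inl ⟨rfl,rfl⟩)⟩
      · ext x; by_cases hx : x = (B,[0]) <;> simp [hx, h1]
    · refine Or.inr (Or.inl ⟨{(B,[1])}, Z \ {(B,[1])},
        (EB_enab ..).2 (Or.inr (Or.inr (Or.inr ⟨rfl,rfl⟩))),
        ⟨Lbl.tick, (EB_lab ..).2 (Or.inr (Or.inr (Or.inr ⟨rfl,rfl⟩))), trivial⟩,
        fun x hx => ((hZ hx.1).resolve_left hx.2), ?_, ?_⟩)
      · rintro x rfl
        exact ⟨(A,[1]), ⟨h2, by simp [hAB]⟩, Lbl.inp b, (EB_lab ..).2 (Or.inr (Or.inr (Or.inl ⟨rfl,rfl⟩))),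
          (EA_lab ..).2 (Or.inr (Or.inr (Or.inr (Or.inl ⟨rfl,rfl⟩))))⟩
      · ext x; by_cases hx : x = (B,[1]) <;> simp [hx, h1]
    · refine Or.inr (Or.inr (Or.inr ⟨∅, Z \ {(A,[0])}, (A,[0]), a,
        (EB_enab ..).2 (Or.inl ⟨rfl,rfl⟩), (EB_lab ..).2 (Or.inl ⟨rfl,rfl⟩),
        fun x hx => hZ hx.1, by rw [EA_events]; simp,
        (EA_lab ..).2 (Or.inl ⟨rfl,rfl⟩),
        fun x hx => absurd hx (Set.notMem_empty x),
        by ext x; by_cases hx : x = (A,[0]) <;> simp [hx, h1]⟩))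
    · refine Or.inr (Or.inr (Or.inr ⟨∅, Z \ {(A,[1])}, (A,[1]), b,
        (EB_enab ..).2 (Or.inr (Or.inr (Or.inl ⟨rfl,rfl⟩))), (EB_lab ..).2 (Or.inr (Or.inr (Or.inl ⟨rfl,rfl⟩))),
        fun x hx => hZ hx.1, by rw [EA_events]; simp,
        (EA_lab ..).2 (Or.inr (Or.inr (Or.inr (Or.inl ⟨rfl,rfl⟩)))),
        fun x hx => absurd hx (Set.notMem_empty x),
        by ext x; by_cases hx : x = (A,[1]) <;> simp [hx, h1]⟩))

lemma prefixSet_zero' {Ev : Type} (σ : ℕ → Option Ev) : prefixSet σ 0 = ∅ := by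
  ext x; simp [prefixSet]

lemma prefixSet_succ' {Ev : Type} (σ : ℕ → Option Ev) (i : ℕ) :
    prefixSet σ (i+1) = prefixSet σ i ∪ {e | σ i = some e} := by
  ext x
  simp only [prefixSet, Set.mem_setOf_eq, Set.mem_union, Nat.lt_succ_iff_lt_or_eq]
  constructor
  · rintro ⟨j, (hj|rfl), hs⟩
    · exact Or.inl ⟨j, hj, hs⟩
    · exact Or.inr hs
  · rintro (⟨j,hj,hs⟩|hs)
    · exact ⟨j, Or.inl hj, hs⟩
    · exact ⟨i, Or.inr rfl, hs⟩

lemma remAfter_enab' {Ev Act' : Type} (E : LES Ev Act') (σ : ℕ → Option Ev) :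
    ∀ (i : ℕ) (X : Set Ev) (e : Ev), (remAfter E σ i).enab X e →
      ∃ Z, E.enab Z e ∧ Z \ prefixSet σ i ⊆ X ∧ ∀ f ∈ prefixSet σ i, e ≠ f := by
  intro i
  induction i with
  | zero => intro X e h; exact ⟨X, h, by simp [prefixSet_zero'], by simp [prefixSet_zero']⟩
  | succ i ih =>
    intro X e h
    rw [prefixSet_succ']
    cases hσ : σ i with
    | none =>
      rw [show remAfter E σ (i+1) = remAfter E σ i by simp [remAfter, hσ]] at h
      obtain ⟨Z, h1, h2, h3⟩ := ih X e h
      refine ⟨Z, h1, fun x hx => h2 ⟨hx.1, fun hm => hx.2 (Or.inl hm)⟩, ?_⟩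
      rintro f (hf|hf)
      · exact h3 f hf
      · simp at hf
    | some e0 =>
      rw [show remAfter E σ (i+1) = remainder (remAfter E σ i) e0 by simp [remAfter, hσ]] at h
      obtain ⟨Y, hY, hne, hnc, hCF, rfl⟩ := h
      obtain ⟨Z, h1, h2, h3⟩ := ih Y e hY
      refine ⟨Z, h1, fun x hx => ?_, ?_⟩
      · refine ⟨h2 ⟨hx.1, fun hm => hx.2 (Or.inl hm)⟩, fun hx0 => hx.2 (Or.inr ?_)⟩
        rw [Set.mem_singleton_iff] at hx0
        show _ = _
        rw [hx0]
      · rintro f (hf|hf)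
        · exact h3 f hf
        · obtain rfl : e0 = f := Option.some_inj.1 hf
          exact hne

lemma E_not_self_enab (hAB : A ≠ B) (hab : a ≠ b) (hac : a ≠ c) (hbc : b ≠ c)
    (Z : Set (Ppt × List ℕ)) (e : Ppt × List ℕ)
    (h : (Ees A B a b c).enab Z e) (hm : e ∈ Z) : False := by
  rcases (E_enab A B a b c hAB hab hac hbc Z e).1 h with
    ⟨rfl,hZ⟩|⟨rfl,hZ⟩|⟨rfl,_,_,hZ⟩|⟨rfl,_,_,hZ⟩|⟨rfl,_,_,hZ⟩|⟨rfl,_,_,hZ⟩|⟨rfl,_,hZ⟩|⟨rfl,_,hZ⟩ <;>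
    [skip; skip; skip; skip; skip; skip; skip; skip] <;>
    · have := hZ hm
      first
        | (rw [EB_events] at this; simp [hAB] at this)
        | (rw [EA_events] at this; simp [hAB, hAB.symm] at this)
        | (simp [EB_events, EA_events, hAB, hAB.symm] at this)

lemma CF_good (hAB : A ≠ B) (X : Set (Ppt × List ℕ))
    (hX : X ⊆ {(A,[1]),(B,[1]),(A,[1,0]),(B,[1,0])}) : CF (Ees A B a b c).conf X := by
  intro x hx y hy hc
  rcases (E_conf A B a b c x y).1 hc with ⟨rfl,_⟩|⟨_,rfl⟩|⟨rfl,_⟩|⟨_,rfl⟩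
  · have := hX hx; simp [hAB, hAB.symm] at this
  · have := hX hy; simp [hAB, hAB.symm] at this
  · have := hX hx; simp [hAB, hAB.symm] at this
  · have := hX hy; simp [hAB, hAB.symm] at this

lemma CF_rem {Ev Act' : Type} (E : LES Ev Act') (e0 : Ev) {W : Set Ev}
    (h : CF E.conf W) : CF (remainder E e0).conf W :=
  fun x hx y hy hc => h x hx y hy hc.1

lemma diff_two (hne : ((B,[1]) : Ppt × List ℕ) ≠ (A,[1])) :
    ({((B,[1]) : Ppt × List ℕ)} : Set (Ppt × List ℕ)) = {(A,[1]),(B,[1])} \ {(A,[1])} := by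
  ext x
  constructor
  · rintro rfl; exact ⟨Or.inr rfl, hne⟩
  · rintro ⟨(rfl|rfl), h⟩
    · exact absurd rfl h
    · rfl

lemma gCF (hAB : A ≠ B) (hab : a ≠ b) (hac : a ≠ c) (hbc : b ≠ c) : CF (Ees A B a b c).conf {(A,[1]),(B,[1]),(A,[1,0]),(B,[1,0])} :=
  CF_good A B a b c hAB _ (le_refl _)

lemma en_ea1 (hAB : A ≠ B) (hab : a ≠ b) (hac : a ≠ c) (hbc : b ≠ c) : (Ees A B a b c).enab ∅ (A,[1]) :=
  (E_enab A B a b c hAB hab hac hbc _ _).2 (Or.inr (Or.inl ⟨rfl, Set.empty_subset _⟩))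

lemma en_eb1 (hAB : A ≠ B) (hab : a ≠ b) (hac : a ≠ c) (hbc : b ≠ c) : (Ees A B a b c).enab {(A,[1])} (B,[1]) :=
  (E_enab A B a b c hAB hab hac hbc _ _).2 (Or.inr (Or.inr (Or.inr (Or.inr (Or.inr (Or.inr
    (Or.inr ⟨rfl, rfl, by rw [EA_events]; simp⟩)))))))

lemma en_ea10 (hAB : A ≠ B) (hab : a ≠ b) (hac : a ≠ c) (hbc : b ≠ c) : (Ees A B a b c).enab {(A,[1]),(B,[1])} (A,[1,0]) :=
  (E_enab A B a b c hAB hab hac hbc _ _).2 (Or.inr (Or.inr (Or.inr (Or.inl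
    ⟨rfl, by simp, by simp, by rw [EB_events]; rintro x (rfl|rfl) <;> simp⟩))))

lemma en_eb10 (hAB : A ≠ B) (hab : a ≠ b) (hac : a ≠ c) (hbc : b ≠ c) : (Ees A B a b c).enab {(A,[1]),(B,[1])} (B,[1,0]) :=
  (E_enab A B a b c hAB hab hac hbc _ _).2 (Or.inr (Or.inr (Or.inr (Or.inr (Or.inr (Or.inl
    ⟨rfl, by simp, by simp, by rw [EA_events]; rintro x (rfl|rfl) <;> simp⟩))))))

lemma r1 (hAB : A ≠ B) (hab : a ≠ b) (hac : a ≠ c) (hbc : b ≠ c) : (remainder (Ees A B a b c) (A,[1])).enab ∅ (B,[1]) :=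
  ⟨{(A,[1])}, en_eb1 A B a b c hAB hab hac hbc, by simp [hAB.symm],
    fun h => gCF A B a b c hAB hab hac hbc _ (by simp) _ (by simp) h,
    CF_good A B a b c hAB _ (by intro x hx; rcases hx with hx|hx <;> simp_all),
    by simp⟩

lemma r2i (hAB : A ≠ B) (hab : a ≠ b) (hac : a ≠ c) (hbc : b ≠ c) : (remainder (Ees A B a b c) (A,[1])).enab {(B,[1])} (A,[1,0]) :=
  ⟨{(A,[1]),(B,[1])}, en_ea10 A B a b c hAB hab hac hbc, by simp,
    fun h => gCF A B a b c hAB hab hac hbc _ (by simp) _ (by simp) h,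
    CF_good A B a b c hAB _ (by intro x hx; rcases hx with (rfl|rfl)|hx <;> simp_all),
    diff_two A B (by simp [hAB.symm])⟩

lemma r2 (hAB : A ≠ B) (hab : a ≠ b) (hac : a ≠ c) (hbc : b ≠ c) : (remainder (remainder (Ees A B a b c) (A,[1])) (B,[1])).enab ∅ (A,[1,0]) :=
  ⟨{(B,[1])}, r2i A B a b c hAB hab hac hbc, by simp,
    fun h => gCF A B a b c hAB hab hac hbc _ (by simp) _ (by simp) h.1,
    CF_rem _ _ (CF_good A B a b c hAB _ (by intro x hx; rcases hx with hx|hx <;> simp_all)),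
    by simp⟩

lemma r2i' (hAB : A ≠ B) (hab : a ≠ b) (hac : a ≠ c) (hbc : b ≠ c) : (remainder (Ees A B a b c) (A,[1])).enab {(B,[1])} (B,[1,0]) :=
  ⟨{(A,[1]),(B,[1])}, en_eb10 A B a b c hAB hab hac hbc, by simp,
    fun h => gCF A B a b c hAB hab hac hbc _ (by simp) _ (by simp) h,
    CF_good A B a b c hAB _ (by intro x hx; rcases hx with (rfl|rfl)|hx <;> simp_all),
    diff_two A B (by simp [hAB.symm])⟩

lemma r2' (hAB : A ≠ B) (hab : a ≠ b) (hac : a ≠ c) (hbc : b ≠ c) : (remainder (remainder (Ees A B a b c) (A,[1])) (B,[1])).enab ∅ (B,[1,0]) :=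
  ⟨{(B,[1])}, r2i' A B a b c hAB hab hac hbc, by simp,
    fun h => gCF A B a b c hAB hab hac hbc _ (by simp) _ (by simp) h.1,
    CF_rem _ _ (CF_good A B a b c hAB _ (by intro x hx; rcases hx with hx|hx <;> simp_all)),
    by simp⟩

lemma r3 (hAB : A ≠ B) (hab : a ≠ b) (hac : a ≠ c) (hbc : b ≠ c) : (remainder (remainder (remainder (Ees A B a b c) (A,[1])) (B,[1])) (B,[1,0])).enab
    ∅ (A,[1,0]) :=
  ⟨∅, r2 A B a b c hAB hab hac hbc, by simp [hAB],
    fun h => gCF A B a b c hAB hab hac hbc _ (by simp) _ (by simp) h.1.1,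
    CF_rem _ _ (CF_rem _ _ (CF_good A B a b c hAB _
      (by intro x hx; rcases hx with hx|hx <;> simp_all))),
    by simp⟩

lemma play1 (hAB : A ≠ B) (hab : a ≠ b) (hac : a ≠ c) (hbc : b ≠ c) : isPlayL (Ees A B a b c) [(A,[1])] :=
  ⟨en_ea1 A B a b c hAB hab hac hbc, trivial⟩

lemma play3 (hAB : A ≠ B) (hab : a ≠ b) (hac : a ≠ c) (hbc : b ≠ c) : isPlayL (Ees A B a b c) [(A,[1]),(B,[1]),(A,[1,0])] :=
  ⟨en_ea1 A B a b c hAB hab hac hbc, r1 A B a b c hAB hab hac hbc, r2 A B a b c hAB hab hac hbc, trivial⟩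

lemma play4 (hAB : A ≠ B) (hab : a ≠ b) (hac : a ≠ c) (hbc : b ≠ c) : isPlayL (Ees A B a b c) [(A,[1]),(B,[1]),(B,[1,0]),(A,[1,0])] :=
  ⟨en_ea1 A B a b c hAB hab hac hbc, r1 A B a b c hAB hab hac hbc, r2' A B a b c hAB hab hac hbc, r3 A B a b c hAB hab hac hbc, trivial⟩


lemma pf1 {Ev : Type} (σ : ℕ → Option Ev) {x0 : Ev} (h0 : σ 0 = some x0) :
    prefixSet σ 1 = {x0} := by
  ext x
  constructor
  · rintro ⟨j,hj,hs⟩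
    interval_cases j
    rw [h0] at hs; exact (Option.some_injective _ hs).symm
  · rintro rfl; exact ⟨0, by omega, h0⟩

lemma pf2 {Ev : Type} (σ : ℕ → Option Ev) {x0 x1 : Ev}
    (h0 : σ 0 = some x0) (h1 : σ 1 = some x1) :
    prefixSet σ 2 = {x0, x1} := by
  ext x
  constructor
  · rintro ⟨j,hj,hs⟩
    interval_cases j
    · rw [h0] at hs; exact Or.inl (Option.some_injective _ hs).symm
    · rw [h1] at hs; exact Or.inr (Option.some_injective _ hs).symm
  · rintro (rfl|rfl)
    · exact ⟨0, by omega, h0⟩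
    · exact ⟨1, by omega, h1⟩

lemma pf3 {Ev : Type} (σ : ℕ → Option Ev) {x0 x1 x2 : Ev}
    (h0 : σ 0 = some x0) (h1 : σ 1 = some x1) (h2 : σ 2 = some x2) :
    prefixSet σ 3 = {x0, x1, x2} := by
  ext x
  constructor
  · rintro ⟨j,hj,hs⟩
    interval_cases j
    · rw [h0] at hs; exact Or.inl (Option.some_injective _ hs).symm
    · rw [h1] at hs; exact Or.inr (Or.inl (Option.some_injective _ hs).symm)
    · rw [h2] at hs; exact Or.inr (Or.inr (Option.some_injective _ hs).symm)
  · rintro (rfl|rfl|rfl)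
    · exact ⟨0, by omega, h0⟩
    · exact ⟨1, by omega, h1⟩
    · exact ⟨2, by omega, h2⟩

lemma pf4 {Ev : Type} (σ : ℕ → Option Ev) {x0 x1 x2 x3 : Ev}
    (h0 : σ 0 = some x0) (h1 : σ 1 = some x1) (h2 : σ 2 = some x2) (h3 : σ 3 = some x3) :
    prefixSet σ 4 = {x0, x1, x2, x3} := by
  ext x
  constructor
  · rintro ⟨j,hj,hs⟩
    interval_cases j
    · rw [h0] at hs; exact Or.inl (Option.some_injective _ hs).symm
    · rw [h1] at hs; exact Or.inr (Or.inl (Option.some_injective _ hs).symm)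
    · rw [h2] at hs; exact Or.inr (Or.inr (Or.inl (Option.some_injective _ hs).symm))
    · rw [h3] at hs; exact Or.inr (Or.inr (Or.inr (Option.some_injective _ hs).symm))
  · rintro (rfl|rfl|rfl|rfl)
    · exact ⟨0, by omega, h0⟩
    · exact ⟨1, by omega, h1⟩
    · exact ⟨2, by omega, h2⟩
    · exact ⟨3, by omega, h3⟩

lemma innocentA (hAB : A ≠ B) (hab : a ≠ b) (hac : a ≠ c) (hbc : b ≠ c)
    (σ : ℕ → Option (Ppt × List ℕ))
    (h0 : σ 0 = some (A,[1]))
    (hmem : ∀ j x, σ j = some x →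
      x = (A,[1]) ∨ x = (B,[1]) ∨ x = (A,[1,0]) ∨ x = (B,[1,0]))
    (hA10 : (∃ j, σ j = some (B,[1])) → ∃ p, σ p = some (A,[1,0])) :
    Innocent Prod.fst (Ees A B a b c) A σ := by
  intro i e hπ hen
  have fired : ∀ (x : Ppt × List ℕ) (p : ℕ), σ p = some x →
      (Ees A B a b c).enab (prefixSet σ i) x →
      ∃ j, i ≤ j ∧ ∃ e', σ j = some e' ∧ ((Ees A B a b c).conf e' x ∨ e' = x) := by
    intro x p hp hx
    by_cases hip : i ≤ p
    · exact ⟨p, hip, x, hp, Or.inr rfl⟩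
    · exact (E_not_self_enab A B a b c hAB hab hac hbc _ _ hx ⟨p, by omega, hp⟩).elim
  rcases (E_enab A B a b c hAB hab hac hbc _ _).1 hen with
    ⟨rfl,hZ⟩|⟨rfl,hZ⟩|⟨rfl,h1,h2,hZ⟩|⟨rfl,h1,h2,hZ⟩|⟨rfl,h1,h2,hZ⟩|⟨rfl,h1,h2,hZ⟩|⟨rfl,h1,hZ⟩|⟨rfl,h1,hZ⟩
  · -- e = (A,[0])
    rcases Nat.eq_zero_or_pos i with rfl|hi
    · exact ⟨0, le_refl _, (A,[1]), h0,
        Or.inl ((E_conf A B a b c _ _).2 (Or.inr (Or.inl ⟨rfl,rfl⟩)))⟩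
    · have hm : ((A,[1]) : Ppt × List ℕ) ∈ prefixSet σ i := ⟨0, hi, h0⟩
      have := hZ hm; rw [EB_events] at this; simp [hAB] at this
  · exact fired (A,[1]) 0 h0 hen
  · obtain ⟨j,-,hj⟩ := h1
    rcases hmem j _ hj with h|h|h|h <;> simp [hAB] at h
  · obtain ⟨j,-,hj⟩ := h2
    obtain ⟨p, hp⟩ := hA10 ⟨j, hj⟩
    exact fired (A,[1,0]) p hp hen
  · exact absurd hπ hAB.symm
  · exact absurd hπ hAB.symm
  · exact absurd hπ hAB.symm
  · exact absurd hπ hAB.symm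

lemma innocent_all (hAB : A ≠ B) (hab : a ≠ b) (hac : a ≠ c) (hbc : b ≠ c)
    (σ : ℕ → Option (Ppt × List ℕ))
    (h0 : σ 0 = some (A,[1]))
    (hmem : ∀ j x, σ j = some x →
      x = (A,[1]) ∨ x = (B,[1]) ∨ x = (A,[1,0]) ∨ x = (B,[1,0]))
    (hp1 : ∃ p, σ p = some (B,[1]))
    (hpa : ∃ p, σ p = some (A,[1,0]))
    (hpb : ∃ p, σ p = some (B,[1,0])) :
    ∀ Pt : Ppt, Innocent Prod.fst (Ees A B a b c) Pt σ := by
  intro Pt i e _ hen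
  have fired : ∀ (x : Ppt × List ℕ) (p : ℕ), σ p = some x →
      (Ees A B a b c).enab (prefixSet σ i) x →
      ∃ j, i ≤ j ∧ ∃ e', σ j = some e' ∧ ((Ees A B a b c).conf e' x ∨ e' = x) := by
    intro x p hp hx
    by_cases hip : i ≤ p
    · exact ⟨p, hip, x, hp, Or.inr rfl⟩
    · exact (E_not_self_enab A B a b c hAB hab hac hbc _ _ hx ⟨p, by omega, hp⟩).elim
  rcases (E_enab A B a b c hAB hab hac hbc _ _).1 hen with
    ⟨rfl,hZ⟩|⟨rfl,hZ⟩|⟨rfl,h1,h2,hZ⟩|⟨rfl,h1,h2,hZ⟩|⟨rfl,h1,h2,hZ⟩|⟨rfl,h1,h2,hZ⟩|⟨rfl,h1,hZ⟩|⟨rfl,h1,hZ⟩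
  · rcases Nat.eq_zero_or_pos i with rfl|hi
    · exact ⟨0, le_refl _, (A,[1]), h0,
        Or.inl ((E_conf A B a b c _ _).2 (Or.inr (Or.inl ⟨rfl,rfl⟩)))⟩
    · have hm : ((A,[1]) : Ppt × List ℕ) ∈ prefixSet σ i := ⟨0, hi, h0⟩
      have := hZ hm; rw [EB_events] at this; simp [hAB] at this
  · exact fired (A,[1]) 0 h0 hen
  · obtain ⟨j,-,hj⟩ := h1
    rcases hmem j _ hj with h|h|h|h <;> simp [hAB] at h
  · exact fired (A,[1,0]) hpa.choose hpa.choose_spec hen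
  · obtain ⟨j,-,hj⟩ := h1
    rcases hmem j _ hj with h|h|h|h <;> simp [hAB, hAB.symm] at h
  · exact fired (B,[1,0]) hpb.choose hpb.choose_spec hen
  · obtain ⟨j,-,hj⟩ := h1
    rcases hmem j _ hj with h|h|h|h <;> simp [hAB] at h
  · exact fired (B,[1]) hp1.choose hp1.choose_spec hen

lemma notInnocentB1 (hAB : A ≠ B) (hab : a ≠ b) (hac : a ≠ c) (hbc : b ≠ c)
    (σ : ℕ → Option (Ppt × List ℕ))
    (h0 : σ 0 = some (A,[1]))
    (hnone : ∀ j, 1 ≤ j → σ j = none) :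
    ¬ Innocent Prod.fst (Ees A B a b c) B σ := by
  intro hInn
  obtain ⟨j, hj, e', hj', -⟩ := hInn 1 (B,[1]) rfl
    (by rw [pf1 σ h0]; exact en_eb1 A B a b c hAB hab hac hbc)
  rw [hnone j hj] at hj'; cases hj'

lemma notInnocentB3 (hAB : A ≠ B) (hab : a ≠ b) (hac : a ≠ c) (hbc : b ≠ c)
    (σ : ℕ → Option (Ppt × List ℕ))
    (h0 : σ 0 = some (A,[1])) (h1 : σ 1 = some (B,[1])) (h2 : σ 2 = some (A,[1,0]))
    (hnone : ∀ j, 3 ≤ j → σ j = none) :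
    ¬ Innocent Prod.fst (Ees A B a b c) B σ := by
  intro hInn
  have hen3 : (Ees A B a b c).enab (prefixSet σ 3) (B,[1,0]) := by
    rw [pf3 σ h0 h1 h2]
    refine (E_enab A B a b c hAB hab hac hbc _ _).2 (Or.inr (Or.inr (Or.inr (Or.inr (Or.inr
      (Or.inl ⟨rfl, by simp, by simp, ?_⟩))))))
    rw [EA_events]; rintro x (rfl|rfl|rfl) <;> simp
  obtain ⟨j, hj, e', hj', -⟩ := hInn 3 (B,[1,0]) rfl hen3
  rw [hnone j hj] at hj'; cases hj'
end Agr

/-- Agreement is strictly weaker than compliance: for `P = ā.c̄ ⊕ b̄` and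
`Q = a + b`, `P` is not compliant with `Q`, yet `A` has a winning strategy in
`𝓒_A(P) | 𝓒_B(Q)`. -/
theorem agreement_not_compliance {Act Ppt : Type} [DecidableEq Ppt]
    (A B : Ppt) (hAB : A ≠ B) (a b c : Act)
    (hab : a ≠ b) (hac : a ≠ c) (hbc : b ≠ c) :
    ¬ Compliant
        (Proc.ichoice (Proc.send a (Proc.send c Proc.success)) (Proc.send b Proc.success))
        (Proc.echoice (Proc.recv a Proc.success) (Proc.recv b Proc.success)) ∧
    ∃ S, WinningFor Prod.fst
      (ccomp
        (contractOf A (Proc.ichoice (Proc.send a (Proc.send c Proc.success)) (Proc.send b Proc.success)))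
        (contractOf B (Proc.echoice (Proc.recv a Proc.success) (Proc.recv b Proc.success))))
      A S := by
  constructor
  · -- Non-compliance
    intro h
    have h1 : Relation.ReflTransGen Step
        ((Proc.ichoice (Proc.send a (Proc.send c Proc.success)) (Proc.send b Proc.success) : Proc Act),
          Proc.echoice (Proc.recv a Proc.success) (Proc.recv b Proc.success))
        (Proc.comm c Proc.success, Proc.success) := by
      refine Relation.ReflTransGen.head (Step.commitL (IBr.il IBr.send)) ?_
      refine Relation.ReflTransGen.head (Step.syncL (EBr.el EBr.recv)) ?_
      exact Relation.ReflTransGen.single (Step.commitL IBr.send)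
    have h2 : Stuck ((Proc.comm c Proc.success, Proc.success) : Proc Act × Proc Act) := by
      intro c' hs
      cases hs with
      | commitL h => cases h
      | commitR h => cases h
      | syncL h => cases h
    have := h _ h1 h2
    simp at this
  · -- The winning strategy: always choose the b̄ branch.
    refine ⟨fun L => {e : Ppt × List ℕ |
      (e = (A,[1]) ∨ e = (A,[1,0])) ∧ isPlayL (Ees A B a b c) (L ++ [e])}, ?_, ?_⟩
    · -- IsStrategy
      intro σL _ e he
      refine ⟨?_, he.2⟩
      rcases he.1 with rfl|rfl <;> rfl
    · -- winning
      intro σ hPlay hConf hFair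
      obtain ⟨hmono, hen⟩ := hPlay
      have hstep : ∀ i e, σ i = some e → ∃ Z, (Ees A B a b c).enab Z e ∧
          Z ⊆ prefixSet σ i ∧ ∀ f ∈ prefixSet σ i, e ≠ f := by
        intro i e h
        obtain ⟨Z, h1, h2, h3⟩ := remAfter_enab' (Ees A B a b c) σ i ∅ e (hen i e h)
        exact ⟨Z, h1, fun x hx => by_contra fun hc => h2 ⟨hx, hc⟩, h3⟩
      cases c0 : σ 0 with
      | none =>
        exfalso
        have hall : ∀ j, 0 ≤ j → validPos σ j →
            ((A,[1]) : Ppt × List ℕ) ∈ {e : Ppt × List ℕ |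
              (e = (A,[1]) ∨ e = (A,[1,0])) ∧
              isPlayL (Ees A B a b c) (prefixList σ j ++ [e])} := by
          intro j _ hv
          cases j with
          | zero => exact ⟨Or.inl rfl, play1 A B a b c hAB hab hac hbc⟩
          | succ k => exact absurd c0 (hv 0 (Nat.succ_pos k))
        obtain ⟨h, -, hsome⟩ := hFair 0 (A,[1]) (fun k hk => absurd hk (Nat.not_lt_zero k)) hall
        rw [hmono 0 h (Nat.zero_le h) c0] at hsome; cases hsome
      | some e0 =>
        have h0 : σ 0 = some ((A,[1]) : Ppt × List ℕ) := by
          obtain ⟨Z, hZ, hsub, -⟩ := hstep 0 e0 c0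
          rw [prefixSet_zero'] at hsub
          obtain rfl : Z = ∅ := Set.subset_empty_iff.1 hsub
          rcases (E_enab A B a b c hAB hab hac hbc _ _).1 hZ with
            ⟨rfl,-⟩|⟨rfl,-⟩|⟨-,h,-,-⟩|⟨-,h,-,-⟩|⟨-,h,-,-⟩|⟨-,h,-,-⟩|⟨-,h,-⟩|⟨-,h,-⟩
          · rcases (hConf 0 _ c0 rfl).1 with h'|h' <;> simp at h'
          · exact c0
          all_goals exact absurd h (Set.notMem_empty _)
        have F1 : prefixSet σ 1 = {((A,[1]) : Ppt × List ℕ)} := pf1 σ h0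
        cases c1 : σ 1 with
        | none =>
          have hnone : ∀ j, 1 ≤ j → σ j = none := fun j hj => hmono 1 j hj c1
          refine Or.inr ⟨?_, B, hAB.symm, notInnocentB1 A B a b c hAB hab hac hbc σ h0 hnone⟩
          refine innocentA A B a b c hAB hab hac hbc σ h0 ?_ ?_
          · intro j x h
            cases j with
            | zero => rw [h0] at h; exact Or.inl (Option.some_injective _ h).symm
            | succ k => rw [hnone (k+1) (by omega)] at h; cases h
          · rintro ⟨j, hj⟩
            cases j with
            | zero => rw [h0] at hj; simp [hAB] at hj
            | succ k => rw [hnone (k+1) (by omega)] at hj; cases hj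
        | some e1 =>
          have h1 : σ 1 = some ((B,[1]) : Ppt × List ℕ) := by
            obtain ⟨Z, hZ, hsub, hnf⟩ := hstep 1 e1 c1
            rw [F1] at hsub hnf
            rcases (E_enab A B a b c hAB hab hac hbc _ _).1 hZ with
              ⟨rfl,-⟩|⟨rfl,-⟩|⟨-,h,-,-⟩|⟨-,-,h,-⟩|⟨-,h,-,-⟩|⟨-,h,-,-⟩|⟨-,h,-⟩|⟨rfl,-,-⟩
            · rcases (hConf 1 _ c1 rfl).1 with h'|h' <;> simp at h'
            · exact (hnf _ rfl rfl).elim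
            · have := hsub h; simp at this
            · have := hsub h; simp [hAB.symm] at this
            · have := hsub h; simp at this
            · have := hsub h; simp [hAB.symm] at this
            · have := hsub h; simp at this
            · exact c1
          have F2 : prefixSet σ 2 = {((A,[1]) : Ppt × List ℕ), (B,[1])} := pf2 σ h0 h1
          have hpl2 : prefixList σ 2 = [((A,[1]) : Ppt × List ℕ), (B,[1])] := by
            simp [prefixList, h0, h1]
          cases c2 : σ 2 with
          | none =>
            exfalso
            have hv2 : validPos σ 2 := by
              intro k hk
              interval_cases k <;> simp [h0, h1]
            have hall : ∀ j, 2 ≤ j → validPos σ j →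
                ((A,[1,0]) : Ppt × List ℕ) ∈ {e : Ppt × List ℕ |
                  (e = (A,[1]) ∨ e = (A,[1,0])) ∧
                  isPlayL (Ees A B a b c) (prefixList σ j ++ [e])} := by
              intro j hj hv
              rcases Nat.lt_or_ge j 3 with hj3|hj3
              · obtain rfl : j = 2 := by omega
                rw [hpl2]
                exact ⟨Or.inr rfl, play3 A B a b c hAB hab hac hbc⟩
              · exact absurd c2 (hv 2 (by omega))
            obtain ⟨h, hh, hsome⟩ := hFair 2 (A,[1,0]) hv2 hall
            rw [hmono 2 h hh c2] at hsome; cases hsome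
          | some e2 =>
            have h2' : e2 = ((A,[1,0]) : Ppt × List ℕ) ∨ e2 = (B,[1,0]) := by
              obtain ⟨Z, hZ, hsub, hnf⟩ := hstep 2 e2 c2
              rw [F2] at hsub hnf
              rcases (E_enab A B a b c hAB hab hac hbc _ _).1 hZ with
                ⟨rfl,-⟩|⟨rfl,-⟩|⟨-,h,-,-⟩|⟨rfl,-,-,-⟩|⟨-,h,-,-⟩|⟨rfl,-,-,-⟩|⟨-,h,-⟩|⟨rfl,-,-⟩
              · rcases (hConf 2 _ c2 rfl).1 with h'|h' <;> simp at h'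
              · exact (hnf _ (Or.inl rfl) rfl).elim
              · have := hsub h; simp at this
              · exact Or.inl rfl
              · have := hsub h; simp [hAB.symm] at this
              · exact Or.inr rfl
              · have := hsub h; simp at this
              · exact (hnf _ (Or.inr rfl) rfl).elim
            rcases h2' with rfl|rfl
            · -- σ 2 = ea10
              have F3 : prefixSet σ 3 =
                  {((A,[1]) : Ppt × List ℕ), (B,[1]), (A,[1,0])} := pf3 σ h0 h1 c2
              cases c3 : σ 3 with
              | none =>
                have hnone : ∀ j, 3 ≤ j → σ j = none := fun j hj => hmono 3 j hj c3
                refine Or.inr ⟨?_, B, hAB.symm,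
                  notInnocentB3 A B a b c hAB hab hac hbc σ h0 h1 c2 hnone⟩
                refine innocentA A B a b c hAB hab hac hbc σ h0 ?_ (fun _ => ⟨2, c2⟩)
                intro j x h
                match j with
                | 0 => rw [h0] at h; exact Or.inl (Option.some_injective _ h).symm
                | 1 => rw [h1] at h; exact Or.inr (Or.inl (Option.some_injective _ h).symm)
                | 2 => rw [c2] at h; exact Or.inr (Or.inr (Or.inl (Option.some_injective _ h).symm))
                | (k+3) => rw [hnone (k+3) (by omega)] at h; cases h
              | some e3 =>
                have h3 : σ 3 = some ((B,[1,0]) : Ppt × List ℕ) := by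
                  obtain ⟨Z, hZ, hsub, hnf⟩ := hstep 3 e3 c3
                  rw [F3] at hsub hnf
                  rcases (E_enab A B a b c hAB hab hac hbc _ _).1 hZ with
                    ⟨rfl,-⟩|⟨rfl,-⟩|⟨-,h,-,-⟩|⟨rfl,-,-,-⟩|⟨-,h,-,-⟩|⟨rfl,-,-,-⟩|⟨-,h,-⟩|⟨rfl,-,-⟩
                  · rcases (hConf 3 _ c3 rfl).1 with h'|h' <;> simp at h'
                  · exact (hnf _ (Or.inl rfl) rfl).elim
                  · have := hsub h; simp at this
                  · exact (hnf _ (Or.inr (Or.inr rfl)) rfl).elim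
                  · have := hsub h; simp [hAB.symm] at this
                  · exact c3
                  · have := hsub h; simp at this
                  · exact (hnf _ (Or.inr (Or.inl rfl)) rfl).elim
                have F4 : prefixSet σ 4 =
                    {((A,[1]) : Ppt × List ℕ), (B,[1]), (A,[1,0]), (B,[1,0])} :=
                  pf4 σ h0 h1 c2 h3
                have c4 : σ 4 = none := by
                  cases c4' : σ 4 with
                  | none => rfl
                  | some e4 =>
                    exfalso
                    obtain ⟨Z, hZ, hsub, hnf⟩ := hstep 4 e4 c4'
                    rw [F4] at hsub hnf
                    rcases (E_enab A B a b c hAB hab hac hbc _ _).1 hZ with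
                      ⟨rfl,-⟩|⟨rfl,-⟩|⟨-,h,-,-⟩|⟨rfl,-,-,-⟩|⟨-,h,-,-⟩|⟨rfl,-,-,-⟩|⟨-,h,-⟩|⟨rfl,-,-⟩
                    · rcases (hConf 4 _ c4' rfl).1 with h'|h' <;> simp at h'
                    · exact (hnf _ (Or.inl rfl) rfl).elim
                    · have := hsub h; simp at this
                    · exact (hnf _ (Or.inr (Or.inr (Or.inl rfl))) rfl).elim
                    · have := hsub h; simp [hAB.symm] at this
                    · exact (hnf _ (Or.inr (Or.inr (Or.inr rfl))) rfl).elim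
                    · have := hsub h; simp at this
                    · exact (hnf _ (Or.inr (Or.inl rfl)) rfl).elim
                have hmem : ∀ j x, σ j = some x →
                    x = ((A,[1]) : Ppt × List ℕ) ∨ x = (B,[1]) ∨ x = (A,[1,0]) ∨ x = (B,[1,0]) := by
                  intro j x h
                  match j with
                  | 0 => rw [h0] at h; exact Or.inl (Option.some_injective _ h).symm
                  | 1 => rw [h1] at h; exact Or.inr (Or.inl (Option.some_injective _ h).symm)
                  | 2 => rw [c2] at h; exact Or.inr (Or.inr (Or.inl (Option.some_injective _ h).symm))
                  | 3 => rw [h3] at h; exact Or.inr (Or.inr (Or.inr (Option.some_injective _ h).symm))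
                  | (k+4) => rw [hmono 4 (k+4) (by omega) c4] at h; cases h
                refine Or.inl ⟨payoffOf A (EAes A a b c), by simp [ccomp, contractOf, EAes], ?_, ?_⟩
                · intro _
                  exact ⟨2, (A,[1,0]), c2, rfl,
                    (EA_lab A a b c _ _).2 (Or.inr (Or.inr (Or.inr (Or.inr ⟨rfl,rfl⟩))))⟩
                · exact innocent_all A B a b c hAB hab hac hbc σ h0 hmem ⟨1, h1⟩ ⟨2, c2⟩ ⟨3, h3⟩
            · -- σ 2 = eb10
              have F3 : prefixSet σ 3 =
                  {((A,[1]) : Ppt × List ℕ), (B,[1]), (B,[1,0])} := pf3 σ h0 h1 c2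
              have hpl3 : prefixList σ 3 = [((A,[1]) : Ppt × List ℕ), (B,[1]), (B,[1,0])] := by
                simp [prefixList, h0, h1, c2]
              cases c3 : σ 3 with
              | none =>
                exfalso
                have hv3 : validPos σ 3 := by
                  intro k hk
                  interval_cases k <;> simp [h0, h1, c2]
                have hall : ∀ j, 3 ≤ j → validPos σ j →
                    ((A,[1,0]) : Ppt × List ℕ) ∈ {e : Ppt × List ℕ |
                      (e = (A,[1]) ∨ e = (A,[1,0])) ∧
                      isPlayL (Ees A B a b c) (prefixList σ j ++ [e])} := by
                  intro j hj hv
                  rcases Nat.lt_or_ge j 4 with hj4|hj4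
                  · obtain rfl : j = 3 := by omega
                    rw [hpl3]
                    exact ⟨Or.inr rfl, play4 A B a b c hAB hab hac hbc⟩
                  · exact absurd c3 (hv 3 (by omega))
                obtain ⟨h, hh, hsome⟩ := hFair 3 (A,[1,0]) hv3 hall
                rw [hmono 3 h hh c3] at hsome; cases hsome
              | some e3 =>
                have h3 : σ 3 = some ((A,[1,0]) : Ppt × List ℕ) := by
                  obtain ⟨Z, hZ, hsub, hnf⟩ := hstep 3 e3 c3
                  rw [F3] at hsub hnf
                  rcases (E_enab A B a b c hAB hab hac hbc _ _).1 hZ with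
                    ⟨rfl,-⟩|⟨rfl,-⟩|⟨-,h,-,-⟩|⟨rfl,-,-,-⟩|⟨-,h,-,-⟩|⟨rfl,-,-,-⟩|⟨-,h,-⟩|⟨rfl,-,-⟩
                  · rcases (hConf 3 _ c3 rfl).1 with h'|h' <;> simp at h'
                  · exact (hnf _ (Or.inl rfl) rfl).elim
                  · have := hsub h; simp at this
                  · exact c3
                  · have := hsub h; simp [hAB.symm] at this
                  · exact (hnf _ (Or.inr (Or.inr rfl)) rfl).elim
                  · have := hsub h; simp at this
                  · exact (hnf _ (Or.inr (Or.inl rfl)) rfl).elim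
                have F4 : prefixSet σ 4 =
                    {((A,[1]) : Ppt × List ℕ), (B,[1]), (B,[1,0]), (A,[1,0])} :=
                  pf4 σ h0 h1 c2 h3
                have c4 : σ 4 = none := by
                  cases c4' : σ 4 with
                  | none => rfl
                  | some e4 =>
                    exfalso
                    obtain ⟨Z, hZ, hsub, hnf⟩ := hstep 4 e4 c4'
                    rw [F4] at hsub hnf
                    rcases (E_enab A B a b c hAB hab hac hbc _ _).1 hZ with
                      ⟨rfl,-⟩|⟨rfl,-⟩|⟨-,h,-,-⟩|⟨rfl,-,-,-⟩|⟨-,h,-,-⟩|⟨rfl,-,-,-⟩|⟨-,h,-⟩|⟨rfl,-,-⟩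
                    · rcases (hConf 4 _ c4' rfl).1 with h'|h' <;> simp at h'
                    · exact (hnf _ (Or.inl rfl) rfl).elim
                    · have := hsub h; simp at this
                    · exact (hnf _ (Or.inr (Or.inr (Or.inr rfl))) rfl).elim
                    · have := hsub h; simp [hAB.symm] at this
                    · exact (hnf _ (Or.inr (Or.inr (Or.inl rfl))) rfl).elim
                    · have := hsub h; simp at this
                    · exact (hnf _ (Or.inr (Or.inl rfl)) rfl).elim
                have hmem : ∀ j x, σ j = some x →
                    x = ((A,[1]) : Ppt × List ℕ) ∨ x = (B,[1]) ∨ x = (A,[1,0]) ∨ x = (B,[1,0]) := by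
                  intro j x h
                  match j with
                  | 0 => rw [h0] at h; exact Or.inl (Option.some_injective _ h).symm
                  | 1 => rw [h1] at h; exact Or.inr (Or.inl (Option.some_injective _ h).symm)
                  | 2 => rw [c2] at h; exact Or.inr (Or.inr (Or.inr (Option.some_injective _ h).symm))
                  | 3 => rw [h3] at h; exact Or.inr (Or.inr (Or.inl (Option.some_injective _ h).symm))
                  | (k+4) => rw [hmono 4 (k+4) (by omega) c4] at h; cases h
                refine Or.inl ⟨payoffOf A (EAes A a b c), by simp [ccomp, contractOf, EAes], ?_, ?_⟩
                · intro _
                  exact ⟨3, (A,[1,0]), h3, rfl,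
                    (EA_lab A a b c _ _).2 (Or.inr (Or.inr (Or.inr (Or.inr ⟨rfl,rfl⟩))))⟩
                · exact innocent_all A B a b c hAB hab hac hbc σ h0 hmem ⟨1, h1⟩ ⟨3, h3⟩ ⟨2, c2⟩
end ESC
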